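/- Let λ be a Young diagram with n cells and let σ be a standard Young tableau of shape λ. Then in ℚ(q,t) one has ∏_{j=1}^n Ω⁰( q t χ_j − (1−q)(1−t)·Σ_{1≤i<j} χ_j/χ_i ) = g_λ · ( (1−qt)/((1−q)(1−t)) )^n · ∏_{j=1}^n Ω⁰( −χ_j^{−1} + (1−q)(1−t)·Σ_{1≤i<j} χ_i/χ_j ), where χ_j/χ_i denotes the Laurent monomial q^{a′_j−a′_i} t^{l′_j−l′_i} and χ_j^{−1} = q^{−a′_j} t^{−l′_j}. -/

import Mathlib

open scoped Classical

noncomputable section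

/-- The field `ℚ(q,t)` of rational functions in two variables over `ℚ`. -/
abbrev K : Type := FractionRing (MvPolynomial (Fin 2) ℚ)

def q : K := algebraMap (MvPolynomial (Fin 2) ℚ) K (MvPolynomial.X 0)
def t : K := algebraMap (MvPolynomial (Fin 2) ℚ) K (MvPolynomial.X 1)

/-- The Laurent monomial `q^i t^j` with integer exponents. -/
def monK (i j : ℤ) : K := q ^ i * t ^ j

/-- `Ω⁰` of a Laurent polynomial, given by its (finitely supported) coefficient
function `P : ℤ × ℤ →₀ ℤ`: the product `∏_{(i,j) ≠ (0,0)} (1 - q^i t^j)^{c_{ij}}`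
(the constant coefficient is ignored). -/
def Omega0 (P : (ℤ × ℤ) →₀ ℤ) : K :=
  ∏ p ∈ P.support.erase (0, 0), (1 - monK p.1 p.2) ^ P p

/-- The coefficient function of the Laurent monomial `q^i t^j`. -/
def lmono (i j : ℤ) : (ℤ × ℤ) →₀ ℤ := Finsupp.single (i, j) 1

/-- The coefficient function of the Laurent polynomial `(1-q)(1-t) · q^u t^v`. -/
def quadr (u v : ℤ) : (ℤ × ℤ) →₀ ℤ :=
  lmono u v - lmono (u + 1) v - lmono u (v + 1) + lmono (u + 1) (v + 1)

/-- A Young diagram: a finite set of cells in `ℕ × ℕ` closed under decreasing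
either coordinate. -/
def IsYoung (μ : Finset (ℕ × ℕ)) : Prop :=
  ∀ a b a' b', (a, b) ∈ μ → a' ≤ a → b' ≤ b → (a', b') ∈ μ

/-- The arm of the cell `x` in `μ`: cells of `μ` in the same row strictly to the right. -/
def arm (μ : Finset (ℕ × ℕ)) (x : ℕ × ℕ) : ℕ :=
  (μ.filter fun y => y.2 = x.2 ∧ x.1 < y.1).card

/-- The leg of the cell `x` in `μ`: cells of `μ` in the same column strictly above. -/
def leg (μ : Finset (ℕ × ℕ)) (x : ℕ × ℕ) : ℕ :=
  (μ.filter fun y => y.1 = x.1 ∧ x.2 < y.2).card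

/-- `g_μ = ∏_{x∈μ} (1 - q^{a(x)+1} t^{-l(x)}) (1 - q^{-a(x)} t^{l(x)+1})`. -/
def gPoly (μ : Finset (ℕ × ℕ)) : K :=
  ∏ x ∈ μ,
    ((1 - monK ((arm μ x : ℤ) + 1) (-(leg μ x : ℤ))) *
      (1 - monK (-(arm μ x : ℤ)) ((leg μ x : ℤ) + 1)))

variable {n : ℕ} {lam : Finset (ℕ × ℕ)}

/-- The coarm (as an integer) of the cell labeled `i+1` in the tableau `σ`. -/
def cx (σ : Fin n → {x // x ∈ lam}) (i : Fin n) : ℤ := ((σ i).val.1 : ℤ)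

/-- The coleg (as an integer) of the cell labeled `i+1` in the tableau `σ`. -/
def cy (σ : Fin n → {x // x ∈ lam}) (i : Fin n) : ℤ := ((σ i).val.2 : ℤ)

/-- A standard Young tableau of shape `lam`, encoded as the bijection sending the
label `i+1` (for `i : Fin n`) to its cell: labels strictly increase along rows
(increasing coarm) and along columns (increasing coleg). -/
def IsSYT (σ : Fin n → {x // x ∈ lam}) : Prop :=
  Function.Bijective σ ∧
    (∀ i j : Fin n, (σ i).val.2 = (σ j).val.2 → (σ i).val.1 < (σ j).val.1 → i < j) ∧
    (∀ i j : Fin n, (σ i).val.1 = (σ j).val.1 → (σ i).val.2 < (σ j).val.2 → i < j)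


/-! ### Auxiliary development -/

section Aux

lemma q_ne_zero : q ≠ 0 := by
  simp only [q, ne_eq, map_eq_zero_iff _ (IsFractionRing.injective (MvPolynomial (Fin 2) ℚ) K)]
  exact MvPolynomial.X_ne_zero 0

lemma t_ne_zero : t ≠ 0 := by
  simp only [t, ne_eq, map_eq_zero_iff _ (IsFractionRing.injective (MvPolynomial (Fin 2) ℚ) K)]
  exact MvPolynomial.X_ne_zero 1

lemma pow_eq_pow_nat (a b c d : ℕ) (h : q ^ a * t ^ b = q ^ c * t ^ d) : a = c ∧ b = d := by
  have hinj := IsFractionRing.injective (MvPolynomial (Fin 2) ℚ) K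
  have h2 : (MvPolynomial.X 0 : MvPolynomial (Fin 2) ℚ) ^ a * MvPolynomial.X 1 ^ b
      = MvPolynomial.X 0 ^ c * MvPolynomial.X 1 ^ d := by
    apply hinj
    simpa [q, t, map_mul, map_pow] using h
  constructor
  · have := congrArg (MvPolynomial.eval (fun k : Fin 2 => if k = 0 then (2:ℚ) else 1)) h2
    simp at this
    have : ((2:ℚ))^a = 2^c := by simpa using this
    have : ((2^a : ℕ) : ℚ) = ((2^c : ℕ) : ℚ) := by push_cast; exact this
    exact Nat.pow_right_injective le_rfl (Nat.cast_injective this)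
  · have := congrArg (MvPolynomial.eval (fun k : Fin 2 => if k = 1 then (2:ℚ) else 1)) h2
    simp at this
    have : ((2:ℚ))^b = 2^d := by simpa using this
    have : ((2^b : ℕ) : ℚ) = ((2^d : ℕ) : ℚ) := by push_cast; exact this
    exact Nat.pow_right_injective le_rfl (Nat.cast_injective this)

lemma monK_ne_one (p : ℤ × ℤ) (hp : p ≠ 0) : monK p.1 p.2 ≠ 1 := by
  obtain ⟨i, j⟩ := p
  intro h
  simp only [monK] at h
  have key : q ^ (i.toNat : ℤ) * t ^ (j.toNat : ℤ) = q ^ ((-i).toNat : ℤ) * t ^ ((-j).toNat : ℤ) := by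
    have e1 : (i.toNat : ℤ) = i + ((-i).toNat : ℤ) := by omega
    have e2 : (j.toNat : ℤ) = j + ((-j).toNat : ℤ) := by omega
    rw [e1, e2, zpow_add₀ q_ne_zero, zpow_add₀ t_ne_zero]
    rw [show q ^ i * q ^ ((-i).toNat:ℤ) * (t ^ j * t ^ ((-j).toNat:ℤ))
        = (q ^ i * t ^ j) * (q ^ ((-i).toNat:ℤ) * t ^ ((-j).toNat:ℤ)) by ring, h, one_mul]
  rw [zpow_natCast, zpow_natCast, zpow_natCast, zpow_natCast] at key
  obtain ⟨h1, h2⟩ := pow_eq_pow_nat _ _ _ _ key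
  apply hp
  have : i = 0 := by omega
  have : j = 0 := by omega
  simp_all [Prod.ext_iff]

lemma one_sub_monK_ne_zero (p : ℤ × ℤ) (hp : p ≠ 0) : 1 - monK p.1 p.2 ≠ 0 := by
  intro h
  exact monK_ne_one p hp (by linear_combination -h)

lemma Omega0_eq_prod (P : (ℤ × ℤ) →₀ ℤ) (S : Finset (ℤ × ℤ)) (hS : P.support ⊆ S) :
    Omega0 P = ∏ p ∈ S.erase (0, 0), (1 - monK p.1 p.2) ^ P p := by
  rw [Omega0]
  apply Finset.prod_subset (Finset.erase_subset_erase _ hS)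
  intro p hpS hpn
  have : P p = 0 := by
    by_contra h
    exact hpn (Finset.mem_erase.2 ⟨(Finset.mem_erase.1 hpS).1, Finsupp.mem_support_iff.2 h⟩)
  simp [this]

lemma Omega0_add (P Q : (ℤ × ℤ) →₀ ℤ) : Omega0 (P + Q) = Omega0 P * Omega0 Q := by
  classical
  set S := P.support ∪ Q.support ∪ (P + Q).support with hS
  rw [Omega0_eq_prod P S (by intro x hx; exact Finset.mem_union_left _ (Finset.mem_union_left _ hx)),
      Omega0_eq_prod Q S (by intro x hx; exact Finset.mem_union_left _ (Finset.mem_union_right _ hx)),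
      Omega0_eq_prod (P + Q) S (fun x hx => Finset.mem_union_right _ hx),
      ← Finset.prod_mul_distrib]
  apply Finset.prod_congr rfl
  intro p hp
  have hp0 : p ≠ (0, 0) := (Finset.mem_erase.1 hp).1
  rw [Finsupp.add_apply, zpow_add₀ (one_sub_monK_ne_zero p hp0)]

lemma Omega0_zero : Omega0 0 = 1 := by simp [Omega0]

lemma Omega0_neg (P : (ℤ × ℤ) →₀ ℤ) : Omega0 (-P) = (Omega0 P)⁻¹ := by
  have := Omega0_add P (-P)
  simp only [add_neg_cancel, Omega0_zero] at this
  exact (inv_eq_of_mul_eq_one_right this.symm).symm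

lemma Omega0_sub (P Q : (ℤ × ℤ) →₀ ℤ) : Omega0 (P - Q) = Omega0 P / Omega0 Q := by
  rw [sub_eq_add_neg, Omega0_add, Omega0_neg, div_eq_mul_inv]

lemma Omega0_sum {α : Type*} (s : Finset α) (f : α → (ℤ × ℤ) →₀ ℤ) :
    Omega0 (∑ a ∈ s, f a) = ∏ a ∈ s, Omega0 (f a) := by
  classical
  induction s using Finset.induction with
  | empty => simp [Omega0_zero]
  | insert a s h ih => rw [Finset.sum_insert h, Omega0_add, ih, Finset.prod_insert h]

lemma Omega0_single (p : ℤ × ℤ) (hp : p ≠ 0) (m : ℤ) :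
    Omega0 (Finsupp.single p m) = (1 - monK p.1 p.2) ^ m := by
  rw [Omega0_eq_prod _ {p} Finsupp.support_single_subset]
  rw [Finset.erase_eq_of_notMem (by simp only [Finset.mem_singleton]; exact fun h => hp h.symm)]
  simp

lemma Omega0_single_zero (m : ℤ) : Omega0 (Finsupp.single (0 : ℤ × ℤ) m) = 1 := by
  rw [Omega0_eq_prod _ {0} Finsupp.support_single_subset]
  simp [Prod.mk_zero_zero]

/-! #### Young diagram structure -/

/-- row length -/
def rowL (μ : Finset (ℕ × ℕ)) (d : ℕ) : ℕ := (μ.filter fun y => y.2 = d).card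

/-- column length -/
def colL (μ : Finset (ℕ × ℕ)) (c : ℕ) : ℕ := (μ.filter fun y => y.1 = c).card

lemma mem_iff_lt_rowL {μ : Finset (ℕ × ℕ)} (hY : IsYoung μ) (c d : ℕ) :
    (c, d) ∈ μ ↔ c < rowL μ d := by
  constructor
  · intro h
    have hsub : (Finset.range (c + 1)).image (fun c' => (c', d)) ⊆
        μ.filter fun y => y.2 = d := by
      intro y hy
      simp only [Finset.mem_image, Finset.mem_range] at hy
      obtain ⟨c', hc', rfl⟩ := hy
      simp only [Finset.mem_filter]
      exact ⟨hY c d c' d h (by omega) le_rfl, by trivial⟩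
    have := Finset.card_le_card hsub
    rw [Finset.card_image_of_injective _ (fun x y hxy => by simpa using hxy),
      Finset.card_range] at this
    unfold rowL; omega
  · intro h
    by_contra hc
    have hsub : (μ.filter fun y => y.2 = d) ⊆
        (Finset.range c).image (fun c' => (c', d)) := by
      intro y hy
      simp only [Finset.mem_filter] at hy
      obtain ⟨hyμ, hy2⟩ := hy
      have hlt : y.1 < c := by
        by_contra hge
        exact hc (hY y.1 y.2 c d (by rwa [Prod.mk.eta]) (by omega) (le_of_eq hy2.symm))
      simp only [Finset.mem_image, Finset.mem_range]
      exact ⟨y.1, hlt, by rw [← hy2, Prod.mk.eta]⟩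
    have := Finset.card_le_card hsub
    rw [Finset.card_image_of_injective _ (fun x y hxy => by simpa using hxy),
      Finset.card_range] at this
    unfold rowL at h; omega

lemma mem_iff_lt_colL {μ : Finset (ℕ × ℕ)} (hY : IsYoung μ) (c d : ℕ) :
    (c, d) ∈ μ ↔ d < colL μ c := by
  constructor
  · intro h
    have hsub : (Finset.range (d + 1)).image (fun d' => (c, d')) ⊆
        μ.filter fun y => y.1 = c := by
      intro y hy
      simp only [Finset.mem_image, Finset.mem_range] at hy
      obtain ⟨d', hd', rfl⟩ := hy
      simp only [Finset.mem_filter]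
      exact ⟨hY c d c d' h le_rfl (by omega), by trivial⟩
    have := Finset.card_le_card hsub
    rw [Finset.card_image_of_injective _ (fun x y hxy => by simpa using hxy),
      Finset.card_range] at this
    unfold colL; omega
  · intro h
    by_contra hc
    have hsub : (μ.filter fun y => y.1 = c) ⊆
        (Finset.range d).image (fun d' => (c, d')) := by
      intro y hy
      simp only [Finset.mem_filter] at hy
      obtain ⟨hyμ, hy1⟩ := hy
      have hlt : y.2 < d := by
        by_contra hge
        exact hc (hY y.1 y.2 c d (by rwa [Prod.mk.eta]) (le_of_eq hy1.symm) (by omega))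
      simp only [Finset.mem_image, Finset.mem_range]
      exact ⟨y.2, hlt, by rw [← hy1, Prod.mk.eta]⟩
    have := Finset.card_le_card hsub
    rw [Finset.card_image_of_injective _ (fun x y hxy => by simpa using hxy),
      Finset.card_range] at this
    unfold colL at h; omega

lemma arm_add_eq {μ : Finset (ℕ × ℕ)} (hY : IsYoung μ) {c d : ℕ} (h : (c, d) ∈ μ) :
    arm μ (c, d) + (c + 1) = rowL μ d := by
  have hsplit : (μ.filter fun y => y.2 = d) =
      (μ.filter fun y => y.2 = d ∧ y.1 ≤ c) ∪ (μ.filter fun y => y.2 = d ∧ c < y.1) := by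
    ext y
    simp only [Finset.mem_filter, Finset.mem_union]
    constructor
    · rintro ⟨h1, h2⟩; by_cases hc : y.1 ≤ c
      · exact Or.inl ⟨h1, h2, hc⟩
      · exact Or.inr ⟨h1, h2, by omega⟩
    · rintro (⟨h1, h2, _⟩ | ⟨h1, h2, _⟩) <;> exact ⟨h1, h2⟩
  have hdisj : Disjoint (μ.filter fun y => y.2 = d ∧ y.1 ≤ c)
      (μ.filter fun y => y.2 = d ∧ c < y.1) := by
    rw [Finset.disjoint_left]
    intro y hy1 hy2
    simp only [Finset.mem_filter] at hy1 hy2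
    omega
  have himg : (μ.filter fun y => y.2 = d ∧ y.1 ≤ c) =
      (Finset.range (c + 1)).image (fun c' => (c', d)) := by
    ext y
    simp only [Finset.mem_filter, Finset.mem_image, Finset.mem_range]
    constructor
    · rintro ⟨h1, h2, h3⟩
      exact ⟨y.1, by omega, by rw [← h2, Prod.mk.eta]⟩
    · rintro ⟨c', hc', rfl⟩
      exact ⟨hY c d c' d h (by omega) le_rfl, by trivial, by omega⟩
  rw [rowL, hsplit, Finset.card_union_of_disjoint hdisj, himg,
    Finset.card_image_of_injective _ (fun x y hxy => by simpa using hxy), Finset.card_range]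
  have : (μ.filter fun y => y.2 = d ∧ c < y.1) = μ.filter fun y => y.2 = (c, d).2 ∧ (c, d).1 < y.1 := rfl
  rw [arm, ← this]
  omega

lemma leg_add_eq {μ : Finset (ℕ × ℕ)} (hY : IsYoung μ) {c d : ℕ} (h : (c, d) ∈ μ) :
    leg μ (c, d) + (d + 1) = colL μ c := by
  have hsplit : (μ.filter fun y => y.1 = c) =
      (μ.filter fun y => y.1 = c ∧ y.2 ≤ d) ∪ (μ.filter fun y => y.1 = c ∧ d < y.2) := by
    ext y
    simp only [Finset.mem_filter, Finset.mem_union]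
    constructor
    · rintro ⟨h1, h2⟩; by_cases hc : y.2 ≤ d
      · exact Or.inl ⟨h1, h2, hc⟩
      · exact Or.inr ⟨h1, h2, by omega⟩
    · rintro (⟨h1, h2, _⟩ | ⟨h1, h2, _⟩) <;> exact ⟨h1, h2⟩
  have hdisj : Disjoint (μ.filter fun y => y.1 = c ∧ y.2 ≤ d)
      (μ.filter fun y => y.1 = c ∧ d < y.2) := by
    rw [Finset.disjoint_left]
    intro y hy1 hy2
    simp only [Finset.mem_filter] at hy1 hy2
    omega
  have himg : (μ.filter fun y => y.1 = c ∧ y.2 ≤ d) =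
      (Finset.range (d + 1)).image (fun d' => (c, d')) := by
    ext y
    simp only [Finset.mem_filter, Finset.mem_image, Finset.mem_range]
    constructor
    · rintro ⟨h1, h2, h3⟩
      exact ⟨y.2, by omega, by rw [← h2, Prod.mk.eta]⟩
    · rintro ⟨d', hd', rfl⟩
      exact ⟨hY c d c d' h le_rfl (by omega), by trivial, by omega⟩
  rw [colL, hsplit, Finset.card_union_of_disjoint hdisj, himg,
    Finset.card_image_of_injective _ (fun x y hxy => by simpa using hxy), Finset.card_range]
  have : (μ.filter fun y => y.1 = c ∧ d < y.2) = μ.filter fun y => y.1 = (c, d).1 ∧ (c, d).2 < y.2 := rfl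
  rw [leg, ← this]
  omega

/-! #### The group algebra of Laurent monomials -/

abbrev R : Type := AddMonoidAlgebra ℤ (ℤ × ℤ)

def eR (i j : ℤ) : R := AddMonoidAlgebra.single (i, j) 1

lemma eR_mul (i j u v : ℤ) : eR i j * eR u v = eR (i + u) (j + v) := by
  simp [eR, AddMonoidAlgebra.single_mul_single, Prod.mk_add_mk]

lemma one_eR : (1 : R) = eR 0 0 := rfl

lemma geomX (N : ℕ) (j : ℤ) :
    (eR 0 0 - eR 1 0) * (∑ c ∈ Finset.range N, eR (c : ℤ) j) =
      eR 0 j - eR (N : ℤ) j := by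
  rw [Finset.mul_sum]
  have : ∀ c ∈ Finset.range N, (eR 0 0 - eR 1 0) * eR (c : ℤ) j
      = eR (c : ℤ) j - eR ((c : ℤ) + 1) j := by
    intro c _
    rw [sub_mul, eR_mul, eR_mul]
    ring_nf
  rw [Finset.sum_congr rfl this]
  have h2 := Finset.sum_range_sub' (fun c : ℕ => eR (c : ℤ) j) N
  push_cast at h2
  rw [h2]

lemma geomXneg (N : ℕ) (j : ℤ) :
    (eR 0 0 - eR 1 0) * (∑ c ∈ Finset.range N, eR (-(c : ℤ)) j) =
      eR (1 - (N : ℤ)) j - eR 1 j := by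
  rw [Finset.mul_sum]
  have : ∀ c ∈ Finset.range N, (eR 0 0 - eR 1 0) * eR (-(c : ℤ)) j
      = -(eR (1 - (c:ℤ)) j - eR (1 - ((c:ℤ)+1)) j) := by
    intro c _
    rw [sub_mul, eR_mul, eR_mul]
    ring_nf
  rw [Finset.sum_congr rfl this, Finset.sum_neg_distrib]
  have h2 := Finset.sum_range_sub' (fun c : ℕ => eR (1 - (c : ℤ)) j) N
  push_cast at h2
  rw [h2]
  abel

def QR : R := (eR 0 0 - eR 1 0) * (eR 0 0 - eR 0 1)
def Bof (μ : Finset (ℕ × ℕ)) : R := ∑ x ∈ μ, eR (x.1 : ℤ) (x.2 : ℤ)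
def Bbar (μ : Finset (ℕ × ℕ)) : R := ∑ x ∈ μ, eR (-(x.1 : ℤ)) (-(x.2 : ℤ))
def hterm (A L : ℤ) : R := eR (A + 1) (-L) + eR (-A) (L + 1)
def Hof (μ : Finset (ℕ × ℕ)) : R := ∑ x ∈ μ, hterm (arm μ x) (leg μ x)

set_option maxHeartbeats 1000000 in
theorem partA : ∀ μ : Finset (ℕ × ℕ), IsYoung μ →
    QR * Bof μ * Bbar μ + Hof μ = eR 1 1 * Bof μ + Bbar μ := by
  intro μ
  induction μ using Finset.strongInduction with
  | _ μ IH =>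
    intro hY
    rcases Finset.eq_empty_or_nonempty μ with rfl | hne
    · simp [Bof, Bbar, Hof]
    have hne2 : (μ.image Prod.snd).Nonempty := hne.image _
    set b := (μ.image Prod.snd).max' hne2 with hbdef
    have hzb : ∀ x ∈ μ, x.2 ≤ b := fun x hx =>
      Finset.le_max' _ _ (Finset.mem_image_of_mem _ hx)
    have hrownem : ((μ.filter fun y => y.2 = b).image Prod.fst).Nonempty := by
      obtain ⟨y, hy, hy2⟩ := Finset.mem_image.1 ((μ.image Prod.snd).max'_mem hne2)
      exact ⟨y.1, Finset.mem_image_of_mem _ (Finset.mem_filter.2 ⟨hy, hy2⟩)⟩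
    set a := ((μ.filter fun y => y.2 = b).image Prod.fst).max' hrownem with hadef
    have hrow : ∀ x ∈ μ, x.2 = b → x.1 ≤ a := fun x hx hx2 =>
      Finset.le_max' _ _ (Finset.mem_image_of_mem _ (Finset.mem_filter.2 ⟨hx, hx2⟩))
    have hz : (a, b) ∈ μ := by
      obtain ⟨y, hy, hy1⟩ := Finset.mem_image.1
        (((μ.filter fun y => y.2 = b).image Prod.fst).max'_mem hrownem)
      obtain ⟨hyμ, hy2⟩ := Finset.mem_filter.1 hy
      have h1 : y.1 = a := by rw [hadef]; exact hy1
      rw [← h1, ← hy2, Prod.mk.eta]; exact hyμ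
    set μ₀ := μ.erase (a, b) with hμ₀def
    have hmem₀ : ∀ x : ℕ × ℕ, x ∈ μ₀ ↔ x ∈ μ ∧ x ≠ (a, b) := by
      intro x; rw [hμ₀def, Finset.mem_erase]; tauto
    have hY₀ : IsYoung μ₀ := by
      intro c d c' d' hcd hc' hd'
      obtain ⟨hcdμ, hcdne⟩ := (hmem₀ (c, d)).1 hcd
      refine (hmem₀ (c', d')).2 ⟨hY c d c' d' hcdμ hc' hd', ?_⟩
      intro he
      have h1 : c' = a := congrArg Prod.fst he
      have h2 : d' = b := congrArg Prod.snd he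
      have hdb : d = b := le_antisymm (hzb (c, d) hcdμ) (by omega)
      have hca : c ≤ a := hrow (c, d) hcdμ hdb
      have hc : c = a := by omega
      exact hcdne (by rw [hc, hdb])
    have hssub : μ₀ ⊂ μ := Finset.erase_ssubset hz
    -- row lengths of μ₀
    have hMb : rowL μ₀ b = a := by
      have h1 : ¬ a < rowL μ₀ b := fun h => ((hmem₀ (a, b)).1 ((mem_iff_lt_rowL hY₀ a b).2 h)).2 rfl
      have h2 : a ≤ rowL μ₀ b := by
        rcases Nat.eq_zero_or_pos a with ha | ha
        · omega
        · have hm : (a - 1, b) ∈ μ₀ := (hmem₀ _).2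
            ⟨hY a b (a - 1) b hz (by omega) le_rfl, by
              intro he; have := congrArg Prod.fst he; simp at this; omega⟩
          have := (mem_iff_lt_rowL hY₀ (a - 1) b).1 hm
          omega
      omega
    have hrowLμ : rowL μ b = a + 1 := by
      have h1 : a < rowL μ b := (mem_iff_lt_rowL hY a b).1 hz
      have h2 : ¬ (a + 1 < rowL μ b) := by
        intro h
        have := hrow _ ((mem_iff_lt_rowL hY (a + 1) b).2 h) rfl
        omega
      omega
    have hMne : ∀ d, d ≠ b → rowL μ₀ d = rowL μ d := by
      intro d hd
      unfold rowL
      congr 1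
      ext y
      simp only [Finset.mem_filter, hmem₀]
      constructor
      · tauto
      · rintro ⟨h1, h2⟩
        refine ⟨⟨h1, ?_⟩, h2⟩
        intro he
        exact hd (by rw [← h2, he])
    have hMhigh : ∀ d, b < d → rowL μ₀ d = 0 := by
      intro d hd
      have : ¬ 0 < rowL μ₀ d := by
        intro h
        have h0 : (0, d) ∈ μ₀ := (mem_iff_lt_rowL hY₀ 0 d).2 h
        have := hzb _ ((hmem₀ _).1 h0).1
        simp at this; omega
      omega
    have hcolμa : colL μ a = b + 1 := by
      have h1 : b < colL μ a := (mem_iff_lt_colL hY a b).1 hz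
      have h2 : ¬ (b + 1 < colL μ a) := by
        intro h
        have := hzb _ ((mem_iff_lt_colL hY a (b + 1)).2 h)
        simp at this
      omega
    have hcol₀a : colL μ₀ a = b := by
      have h1 : ¬ b < colL μ₀ a := fun h => ((hmem₀ (a, b)).1 ((mem_iff_lt_colL hY₀ a b).2 h)).2 rfl
      have h2 : b ≤ colL μ₀ a := by
        rcases Nat.eq_zero_or_pos b with hb | hb
        · omega
        · have hm : (a, b - 1) ∈ μ₀ := (hmem₀ _).2
            ⟨hY a b a (b - 1) hz le_rfl (by omega), by
              intro he; have := congrArg Prod.snd he; simp at this; omega⟩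
          have := (mem_iff_lt_colL hY₀ a (b - 1)).1 hm
          omega
      omega
    have hcol_le₀ : ∀ c, colL μ₀ c ≤ colL μ c := by
      intro c
      rw [hμ₀def]
      exact Finset.card_le_card (Finset.filter_subset_filter _ (Finset.erase_subset _ _))
    -- cell values
    have harmrow : ∀ c, c < a → (arm μ (c, b) : ℤ) = (a : ℤ) - c := by
      intro c hc
      have hm : (c, b) ∈ μ := hY a b c b hz (by omega) le_rfl
      have := arm_add_eq hY hm
      rw [hrowLμ] at this
      omega
    have harm0row : ∀ c, c < a → (arm μ₀ (c, b) : ℤ) = (a : ℤ) - 1 - c := by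
      intro c hc
      have hm : (c, b) ∈ μ₀ := (hmem₀ _).2 ⟨hY a b c b hz (by omega) le_rfl, by
        intro he; have := congrArg Prod.fst he; simp at this; omega⟩
      have := arm_add_eq hY₀ hm
      rw [hMb] at this
      omega
    have hcol_le : ∀ c, colL μ c ≤ b + 1 := by
      intro c
      by_contra h
      have := hzb _ ((mem_iff_lt_colL hY c (b + 1)).2 (by omega))
      simp at this
    have hlegrow : ∀ c, c < a → leg μ (c, b) = 0 := by
      intro c hc
      have hm : (c, b) ∈ μ := hY a b c b hz (by omega) le_rfl
      have := leg_add_eq hY hm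
      have h2 := hcol_le c
      omega
    have hleg0row : ∀ c, c < a → leg μ₀ (c, b) = 0 := by
      intro c hc
      have hm : (c, b) ∈ μ₀ := (hmem₀ _).2 ⟨hY a b c b hz (by omega) le_rfl, by
        intro he; have := congrArg Prod.fst he; simp at this; omega⟩
      have := leg_add_eq hY₀ hm
      have h2 : colL μ₀ c ≤ colL μ c := hcol_le₀ c
      have h3 := hcol_le c
      omega
    have hmemcol : ∀ d, d < b → (a, d) ∈ μ₀ := by
      intro d hd
      exact (hmem₀ _).2 ⟨hY a b a d hz le_rfl (by omega), by
        intro he; have := congrArg Prod.snd he; simp at this; omega⟩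
    have harmcol : ∀ d, d < b → (arm μ (a, d) : ℤ) = (rowL μ₀ d : ℤ) - 1 - a := by
      intro d hd
      have hm : (a, d) ∈ μ := hY a b a d hz le_rfl (by omega)
      have := arm_add_eq hY hm
      rw [← hMne d (by omega)] at this
      omega
    have harm0col : ∀ d, d < b → (arm μ₀ (a, d) : ℤ) = (rowL μ₀ d : ℤ) - 1 - a := by
      intro d hd
      have := arm_add_eq hY₀ (hmemcol d hd)
      omega
    have hlegcol : ∀ d, d < b → (leg μ (a, d) : ℤ) = (b : ℤ) - d := by
      intro d hd
      have hm : (a, d) ∈ μ := hY a b a d hz le_rfl (by omega)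
      have := leg_add_eq hY hm
      rw [hcolμa] at this
      omega
    have hleg0col : ∀ d, d < b → (leg μ₀ (a, d) : ℤ) = (b : ℤ) - 1 - d := by
      intro d hd
      have := leg_add_eq hY₀ (hmemcol d hd)
      rw [hcol₀a] at this
      omega
    have harmz : arm μ (a, b) = 0 := by
      have := arm_add_eq hY hz
      rw [hrowLμ] at this
      omega
    have hlegz : leg μ (a, b) = 0 := by
      have := leg_add_eq hY hz
      rw [hcolμa] at this
      omega
    have harm_untouched : ∀ x : ℕ × ℕ, x.2 ≠ b → arm μ x = arm μ₀ x := by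
      intro x hx
      unfold arm
      congr 1
      ext y
      simp only [Finset.mem_filter, hmem₀]
      constructor
      · rintro ⟨h1, h2, h3⟩
        refine ⟨⟨h1, ?_⟩, h2, h3⟩
        intro he
        exact hx (by rw [← h2, he])
      · tauto
    have hleg_untouched : ∀ x : ℕ × ℕ, x.1 ≠ a → leg μ x = leg μ₀ x := by
      intro x hx
      unfold leg
      congr 1
      ext y
      simp only [Finset.mem_filter, hmem₀]
      constructor
      · rintro ⟨h1, h2, h3⟩
        refine ⟨⟨h1, ?_⟩, h2, h3⟩
        intro he
        exact hx (by rw [← h2, he])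
      · tauto
    -- row image description
    have hinj : ∀ d : ℕ, ∀ x ∈ Finset.range (rowL μ₀ d), ∀ y ∈ Finset.range (rowL μ₀ d),
        (fun c => (c, d)) x = (fun c => (c, d)) y → x = y := by
      intro d x _ y _ h; simpa using h
    have hrowimg : ∀ d, μ₀.filter (fun x => x.2 = d)
        = (Finset.range (rowL μ₀ d)).image (fun c => (c, d)) := by
      intro d
      ext x
      simp only [Finset.mem_filter, Finset.mem_image, Finset.mem_range]
      constructor
      · rintro ⟨h1, h2⟩
        refine ⟨x.1, (mem_iff_lt_rowL hY₀ x.1 d).1 ?_, by rw [← h2, Prod.mk.eta]⟩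
        rw [show ((x.1, d) : ℕ × ℕ) = x by rw [← h2, Prod.mk.eta]]
        exact h1
      · rintro ⟨c, hc, rfl⟩
        exact ⟨(mem_iff_lt_rowL hY₀ c d).2 hc, rfl⟩
    have hdecomp : ∀ f : ℕ × ℕ → R, ∑ x ∈ μ₀, f x
        = ∑ d ∈ Finset.range (b + 1), ∑ c ∈ Finset.range (rowL μ₀ d), f (c, d) := by
      intro f
      have hmaps : ∀ x ∈ μ₀, x.2 ∈ Finset.range (b + 1) := by
        intro x hx
        exact Finset.mem_range.2 (by have := hzb x ((hmem₀ x).1 hx).1; omega)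
      rw [← Finset.sum_fiberwise_of_maps_to hmaps f]
      apply Finset.sum_congr rfl
      intro d _
      rw [hrowimg d, Finset.sum_image (by intro x _ y _ h; simpa using h)]
    have hsum_erase : ∀ f : ℕ × ℕ → R, ∑ x ∈ μ, f x = ∑ x ∈ μ₀, f x + f (a, b) := by
      intro f; rw [hμ₀def]; exact (Finset.sum_erase_add μ f hz).symm
    -- the H computation
    have hH : Hof μ = Hof μ₀ + (eR ((a : ℤ) + 1) 0 + eR (-(a : ℤ)) 1
        + ∑ d ∈ Finset.range b,
            (eR ((rowL μ₀ d : ℤ) - a) ((d : ℤ) - b) - eR ((rowL μ₀ d : ℤ) - a) ((d : ℤ) - b + 1)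
              + eR ((a : ℤ) + 1 - (rowL μ₀ d : ℤ)) ((b : ℤ) - d + 1)
              - eR ((a : ℤ) + 1 - (rowL μ₀ d : ℤ)) ((b : ℤ) - d))) := by
      rw [Hof, hsum_erase]
      have hzterm : hterm (arm μ (a, b) : ℤ) (leg μ (a, b) : ℤ) = eR 1 0 + eR 0 1 := by
        rw [harmz, hlegz]
        simp [hterm]
      rw [hzterm]
      set g : ℕ × ℕ → R :=
        fun x => hterm (arm μ x : ℤ) (leg μ x : ℤ) - hterm (arm μ₀ x : ℤ) (leg μ₀ x : ℤ)
        with hgdef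
      have hsplit : ∑ x ∈ μ₀, hterm (arm μ x : ℤ) (leg μ x : ℤ)
          = Hof μ₀ + ∑ x ∈ μ₀, g x := by
        rw [Hof, ← Finset.sum_add_distrib]
        apply Finset.sum_congr rfl
        intro x _
        simp only [hgdef]
        abel
      rw [hsplit]
      have hD : ∑ x ∈ μ₀, g x = (∑ x ∈ μ₀.filter (fun x => x.2 = b), g x)
          + ∑ x ∈ μ₀.filter (fun x => ¬ x.2 = b), g x :=
        (Finset.sum_filter_add_sum_filter_not μ₀ _ g).symm
      have hD2 : ∑ x ∈ μ₀.filter (fun x => ¬ x.2 = b), g x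
          = ∑ x ∈ (μ₀.filter (fun x => ¬ x.2 = b)).filter (fun x => x.1 = a), g x
            + ∑ x ∈ (μ₀.filter (fun x => ¬ x.2 = b)).filter (fun x => ¬ x.1 = a), g x :=
        (Finset.sum_filter_add_sum_filter_not _ _ g).symm
      have hzero : ∑ x ∈ (μ₀.filter (fun x => ¬ x.2 = b)).filter (fun x => ¬ x.1 = a), g x = 0 := by
        apply Finset.sum_eq_zero
        intro x hx
        simp only [Finset.mem_filter] at hx
        simp only [hgdef]
        rw [harm_untouched x hx.1.2, hleg_untouched x hx.2]
        abel
      have hrowb : ∑ x ∈ μ₀.filter (fun x => x.2 = b), g x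
          = eR ((a : ℤ) + 1) 0 + eR (-(a : ℤ)) 1 - eR 1 0 - eR 0 1 := by
        rw [hrowimg b, hMb, Finset.sum_image (by intro x _ y _ h; simpa using h)]
        have hbody : ∀ c ∈ Finset.range a, g (c, b)
            = (fun c : ℕ => eR ((a : ℤ) + 1 - c) 0 + eR ((c : ℤ) - a) 1) c
              - (fun c : ℕ => eR ((a : ℤ) + 1 - c) 0 + eR ((c : ℤ) - a) 1) (c + 1) := by
          intro c hc
          have hc' := Finset.mem_range.1 hc
          simp only [hgdef]
          rw [harmrow c hc', harm0row c hc', hlegrow c hc', hleg0row c hc']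
          simp only [hterm, Nat.cast_zero, neg_zero, zero_add]
          push_cast
          ring_nf
        rw [Finset.sum_congr rfl hbody, Finset.sum_range_sub']
        push_cast
        ring_nf
      have hcolset : (μ₀.filter (fun x => ¬ x.2 = b)).filter (fun x => x.1 = a)
          = (Finset.range b).image (fun d => (a, d)) := by
        ext x
        simp only [Finset.mem_filter, Finset.mem_image, Finset.mem_range]
        constructor
        · rintro ⟨⟨h1, h2⟩, h3⟩
          have hxb := hzb x ((hmem₀ x).1 h1).1
          refine ⟨x.2, by omega, by rw [← h3, Prod.mk.eta]⟩
        · rintro ⟨d, hd, rfl⟩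
          exact ⟨⟨hmemcol d hd, by simp; omega⟩, rfl⟩
      have hcolsum : ∑ x ∈ (μ₀.filter (fun x => ¬ x.2 = b)).filter (fun x => x.1 = a), g x
          = ∑ d ∈ Finset.range b,
            (eR ((rowL μ₀ d : ℤ) - a) ((d : ℤ) - b) - eR ((rowL μ₀ d : ℤ) - a) ((d : ℤ) - b + 1)
              + eR ((a : ℤ) + 1 - (rowL μ₀ d : ℤ)) ((b : ℤ) - d + 1)
              - eR ((a : ℤ) + 1 - (rowL μ₀ d : ℤ)) ((b : ℤ) - d)) := by
        rw [hcolset, Finset.sum_image (by intro x _ y _ h; simpa using h)]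
        apply Finset.sum_congr rfl
        intro d hd
        have hd' := Finset.mem_range.1 hd
        simp only [hgdef]
        rw [harmcol d hd', harm0col d hd', hlegcol d hd', hleg0col d hd']
        simp only [hterm]
        ring_nf
      rw [hD, hD2, hzero, hrowb, hcolsum]
      abel
    -- step1 : expansion of QR * B₀ * z̄
    have step1 : QR * Bof μ₀ * eR (-(a : ℤ)) (-(b : ℤ))
        = ∑ d ∈ Finset.range (b + 1),
            (eR (-(a : ℤ)) ((d : ℤ) - b) - eR (-(a : ℤ)) ((d : ℤ) - b + 1)
              - eR ((rowL μ₀ d : ℤ) - a) ((d : ℤ) - b)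
              + eR ((rowL μ₀ d : ℤ) - a) ((d : ℤ) - b + 1)) := by
      rw [show Bof μ₀ = ∑ d ∈ Finset.range (b + 1), ∑ c ∈ Finset.range (rowL μ₀ d),
          eR (c : ℤ) (d : ℤ) from hdecomp _]
      rw [Finset.mul_sum, Finset.sum_mul]
      apply Finset.sum_congr rfl
      intro d _
      rw [show QR * (∑ c ∈ Finset.range (rowL μ₀ d), eR (c : ℤ) (d : ℤ)) * eR (-(a:ℤ)) (-(b:ℤ))
          = (eR 0 0 - eR 0 1) * eR (-(a:ℤ)) (-(b:ℤ))
            * ((eR 0 0 - eR 1 0) * ∑ c ∈ Finset.range (rowL μ₀ d), eR (c:ℤ) (d:ℤ)) by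
        rw [QR]; ring]
      rw [geomX]
      simp only [mul_sub, sub_mul, eR_mul]
      ring_nf
    -- step2 : expansion of QR * B̄₀ * z
    have step2 : QR * Bbar μ₀ * eR (a : ℤ) (b : ℤ)
        = ∑ d ∈ Finset.range (b + 1),
            (eR ((a:ℤ) + 1 - (rowL μ₀ d : ℤ)) ((b:ℤ) - d)
              - eR ((a:ℤ) + 1 - (rowL μ₀ d : ℤ)) ((b:ℤ) - d + 1)
              - eR ((a:ℤ) + 1) ((b:ℤ) - d) + eR ((a:ℤ) + 1) ((b:ℤ) - d + 1)) := by
      rw [show Bbar μ₀ = ∑ d ∈ Finset.range (b + 1), ∑ c ∈ Finset.range (rowL μ₀ d),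
          eR (-(c : ℤ)) (-(d : ℤ)) from hdecomp _]
      rw [Finset.mul_sum, Finset.sum_mul]
      apply Finset.sum_congr rfl
      intro d _
      rw [show QR * (∑ c ∈ Finset.range (rowL μ₀ d), eR (-(c:ℤ)) (-(d:ℤ))) * eR ((a:ℤ)) ((b:ℤ))
          = (eR 0 0 - eR 0 1) * eR ((a:ℤ)) ((b:ℤ))
            * ((eR 0 0 - eR 1 0) * ∑ c ∈ Finset.range (rowL μ₀ d), eR (-(c:ℤ)) (-(d:ℤ))) by
        rw [QR]; ring]
      rw [geomXneg]
      simp only [mul_sub, sub_mul, eR_mul]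
      ring_nf
    -- the combined telescoping identity
    have hsums : (∑ d ∈ Finset.range b,
            (eR (-(a : ℤ)) ((d : ℤ) - b) - eR (-(a : ℤ)) ((d : ℤ) - b + 1)
              - eR ((rowL μ₀ d : ℤ) - a) ((d : ℤ) - b)
              + eR ((rowL μ₀ d : ℤ) - a) ((d : ℤ) - b + 1)))
          + (∑ d ∈ Finset.range b,
            (eR ((a:ℤ) + 1 - (rowL μ₀ d : ℤ)) ((b:ℤ) - d)
              - eR ((a:ℤ) + 1 - (rowL μ₀ d : ℤ)) ((b:ℤ) - d + 1)
              - eR ((a:ℤ) + 1) ((b:ℤ) - d) + eR ((a:ℤ) + 1) ((b:ℤ) - d + 1)))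
          + (∑ d ∈ Finset.range b,
            (eR ((rowL μ₀ d : ℤ) - a) ((d : ℤ) - b) - eR ((rowL μ₀ d : ℤ) - a) ((d : ℤ) - b + 1)
              + eR ((a : ℤ) + 1 - (rowL μ₀ d : ℤ)) ((b : ℤ) - d + 1)
              - eR ((a : ℤ) + 1 - (rowL μ₀ d : ℤ)) ((b : ℤ) - d)))
          = eR (-(a:ℤ)) (-(b:ℤ)) - eR (-(a:ℤ)) 0 + (eR ((a:ℤ)+1) ((b:ℤ)+1) - eR ((a:ℤ)+1) 1) := by
      rw [← Finset.sum_add_distrib, ← Finset.sum_add_distrib]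
      have hcomb : ∀ d ∈ Finset.range b,
          (eR (-(a : ℤ)) ((d : ℤ) - b) - eR (-(a : ℤ)) ((d : ℤ) - b + 1)
              - eR ((rowL μ₀ d : ℤ) - a) ((d : ℤ) - b)
              + eR ((rowL μ₀ d : ℤ) - a) ((d : ℤ) - b + 1))
          + (eR ((a:ℤ) + 1 - (rowL μ₀ d : ℤ)) ((b:ℤ) - d)
              - eR ((a:ℤ) + 1 - (rowL μ₀ d : ℤ)) ((b:ℤ) - d + 1)
              - eR ((a:ℤ) + 1) ((b:ℤ) - d) + eR ((a:ℤ) + 1) ((b:ℤ) - d + 1))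
          + (eR ((rowL μ₀ d : ℤ) - a) ((d : ℤ) - b) - eR ((rowL μ₀ d : ℤ) - a) ((d : ℤ) - b + 1)
              + eR ((a : ℤ) + 1 - (rowL μ₀ d : ℤ)) ((b : ℤ) - d + 1)
              - eR ((a : ℤ) + 1 - (rowL μ₀ d : ℤ)) ((b : ℤ) - d))
          = (fun k : ℕ => eR (-(a:ℤ)) ((k:ℤ) - b) + eR ((a:ℤ)+1) ((b:ℤ) - k + 1)) d
            - (fun k : ℕ => eR (-(a:ℤ)) ((k:ℤ) - b) + eR ((a:ℤ)+1) ((b:ℤ) - k + 1)) (d + 1) := by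
        intro d _
        simp only
        push_cast
        ring_nf
      rw [Finset.sum_congr rfl hcomb, Finset.sum_range_sub']
      push_cast
      ring_nf
    -- final assembly
    have hBof : Bof μ = Bof μ₀ + eR (a : ℤ) (b : ℤ) := by
      rw [Bof, Bof, hsum_erase (fun x => eR (x.1 : ℤ) (x.2 : ℤ))]
    have hBbar : Bbar μ = Bbar μ₀ + eR (-(a : ℤ)) (-(b : ℤ)) := by
      rw [Bbar, Bbar, hsum_erase (fun x => eR (-(x.1 : ℤ)) (-(x.2 : ℤ)))]
    have hIH := IH μ₀ hssub hY₀
    have hzzb : eR (a:ℤ) (b:ℤ) * eR (-(a:ℤ)) (-(b:ℤ)) = eR 0 0 := by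
      rw [eR_mul]; ring_nf
    have hQR : QR = eR 0 0 - eR 1 0 - eR 0 1 + eR 1 1 := by
      rw [QR]
      simp only [sub_mul, mul_sub, eR_mul]
      ring_nf
    have hz11 : eR 1 1 * eR (a : ℤ) (b : ℤ) = eR (1 + (a:ℤ)) (1 + (b:ℤ)) := eR_mul 1 1 _ _
    rw [hBof, hBbar, hH]
    rw [Finset.sum_range_succ, hMb] at step1
    rw [Finset.sum_range_succ, hMb] at step2
    set SA := ∑ d ∈ Finset.range b,
            (eR (-(a : ℤ)) ((d : ℤ) - b) - eR (-(a : ℤ)) ((d : ℤ) - b + 1)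
              - eR ((rowL μ₀ d : ℤ) - a) ((d : ℤ) - b)
              + eR ((rowL μ₀ d : ℤ) - a) ((d : ℤ) - b + 1)) with hSAdef
    set SB := ∑ d ∈ Finset.range b,
            (eR ((a:ℤ) + 1 - (rowL μ₀ d : ℤ)) ((b:ℤ) - d)
              - eR ((a:ℤ) + 1 - (rowL μ₀ d : ℤ)) ((b:ℤ) - d + 1)
              - eR ((a:ℤ) + 1) ((b:ℤ) - d) + eR ((a:ℤ) + 1) ((b:ℤ) - d + 1)) with hSBdef
    set SC := ∑ d ∈ Finset.range b,
            (eR ((rowL μ₀ d : ℤ) - a) ((d : ℤ) - b) - eR ((rowL μ₀ d : ℤ) - a) ((d : ℤ) - b + 1)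
              + eR ((a : ℤ) + 1 - (rowL μ₀ d : ℤ)) ((b : ℤ) - d + 1)
              - eR ((a : ℤ) + 1 - (rowL μ₀ d : ℤ)) ((b : ℤ) - d)) with hSCdef
    linear_combination (norm := ring_nf) hIH + step1 + step2 + hsums + QR * hzzb - QR * one_eR - hz11 + hQR


end Aux

section Glue

/-- Transfer map (identity) from coefficient functions to the group algebra. -/
def toR (P : (ℤ × ℤ) →₀ ℤ) : R := AddMonoidAlgebra.ofCoeff P

lemma toR_inj {P Q : (ℤ × ℤ) →₀ ℤ} (h : toR P = toR Q) : P = Q := AddMonoidAlgebra.ofCoeff_injective h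

lemma toR_add (P Q : (ℤ × ℤ) →₀ ℤ) : toR (P + Q) = toR P + toR Q := rfl
lemma toR_sub (P Q : (ℤ × ℤ) →₀ ℤ) : toR (P - Q) = toR P - toR Q := rfl
lemma toR_neg (P : (ℤ × ℤ) →₀ ℤ) : toR (-P) = -toR P := rfl
lemma toR_lmono (i j : ℤ) : toR (lmono i j) = eR i j := rfl

lemma toR_sum {α : Type*} (s : Finset α) (f : α → (ℤ × ℤ) →₀ ℤ) :
    toR (∑ a ∈ s, f a) = ∑ a ∈ s, toR (f a) := by
  classical
  induction s using Finset.induction with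
  | empty => rfl
  | insert a s h ih => rw [Finset.sum_insert h, Finset.sum_insert h, toR_add, ih]

lemma toR_quadr (u v : ℤ) : toR (quadr u v) = eR u v * QR := by
  have : toR (quadr u v) = eR u v - eR (u+1) v - eR u (v+1) + eR (u+1) (v+1) := rfl
  rw [this, QR]
  simp only [sub_mul, mul_sub, eR_mul]
  ring_nf

end Glue

theorem statement2 (n : ℕ) (lam : Finset (ℕ × ℕ)) (hY : IsYoung lam)
    (hcard : lam.card = n) (σ : Fin n → {x // x ∈ lam}) (hσ : IsSYT σ) :
    (∏ j : Fin n,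
        Omega0 (lmono (cx σ j + 1) (cy σ j + 1) -
          ∑ i ∈ Finset.univ.filter (· < j),
            quadr (cx σ j - cx σ i) (cy σ j - cy σ i))) =
      gPoly lam * ((1 - q * t) / ((1 - q) * (1 - t))) ^ n *
        ∏ j : Fin n,
          Omega0 (-lmono (-cx σ j) (-cy σ j) +
            ∑ i ∈ Finset.univ.filter (· < j),
              quadr (cx σ i - cx σ j) (cy σ i - cy σ j)) := by
  classical
  have hbij := hσ.1
  -- abbreviations
  set G : Fin n → Fin n → R :=
    fun i j => eR (cx σ i - cx σ j) (cy σ i - cy σ j) * QR with hGdef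
  have hB : (∑ j : Fin n, eR (cx σ j) (cy σ j)) = Bof lam := by
    rw [Bof, ← Finset.sum_coe_sort lam (fun x => eR (x.1 : ℤ) (x.2 : ℤ))]
    simp only [cx, cy]
    exact Function.Bijective.sum_comp hbij (fun y => eR (y.val.1 : ℤ) (y.val.2 : ℤ))
  have hBb : (∑ j : Fin n, eR (-cx σ j) (-cy σ j)) = Bbar lam := by
    rw [Bbar, ← Finset.sum_coe_sort lam (fun x => eR (-(x.1 : ℤ)) (-(x.2 : ℤ)))]
    simp only [cx, cy]
    exact Function.Bijective.sum_comp hbij (fun y => eR (-(y.val.1 : ℤ)) (-(y.val.2 : ℤ)))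
  have hdouble : ∑ i : Fin n, ∑ j : Fin n, G i j = Bof lam * Bbar lam * QR := by
    have h2 : ∀ i : Fin n, ∑ j : Fin n, G i j
        = (∑ j : Fin n, eR (cx σ i) (cy σ i) * eR (-cx σ j) (-cy σ j)) * QR := by
      intro i
      rw [Finset.sum_mul]
      apply Finset.sum_congr rfl
      intro j _
      rw [hGdef]
      simp only
      rw [eR_mul]
      ring_nf
    rw [Finset.sum_congr rfl (fun i _ => h2 i), ← Finset.sum_mul, ← Finset.sum_mul_sum, hB, hBb]
  have hdiag : ∑ i : Fin n, G i i = ∑ _i : Fin n, eR 0 0 * QR := by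
    apply Finset.sum_congr rfl
    intro i _
    rw [hGdef]
    simp only
    rw [sub_self, sub_self]
  have hswap : (∑ j : Fin n, ∑ i ∈ Finset.univ.filter (· < j), G i j)
      = ∑ i : Fin n, ∑ j ∈ Finset.univ.filter (fun k => i < k), G i j := by
    calc (∑ j : Fin n, ∑ i ∈ Finset.univ.filter (· < j), G i j)
        = ∑ j : Fin n, ∑ i : Fin n, if i < j then G i j else 0 :=
          Finset.sum_congr rfl fun j _ => Finset.sum_filter _ _
      _ = ∑ i : Fin n, ∑ j : Fin n, if i < j then G i j else 0 := Finset.sum_comm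
      _ = ∑ i : Fin n, ∑ j ∈ Finset.univ.filter (fun k => i < k), G i j :=
          Finset.sum_congr rfl fun i _ => (Finset.sum_filter _ _).symm
  have hsplit : ∑ i : Fin n, ∑ j : Fin n, G i j
      = (∑ i : Fin n, G i i) + (∑ j : Fin n, ∑ i ∈ Finset.univ.filter (· < j), G j i)
        + ∑ i : Fin n, ∑ j ∈ Finset.univ.filter (fun k => i < k), G i j := by
    rw [← Finset.sum_add_distrib, ← Finset.sum_add_distrib]
    apply Finset.sum_congr rfl
    intro i _
    rw [← Finset.sum_filter_add_sum_filter_not Finset.univ (fun k => k < i) (G i)]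
    have hins : Finset.univ.filter (fun k : Fin n => ¬ k < i)
        = insert i (Finset.univ.filter (fun k => i < k)) := by
      ext k
      simp only [Finset.mem_filter, Finset.mem_univ, true_and, Finset.mem_insert]
      rw [Fin.lt_def, Fin.lt_def, Fin.ext_iff]
      omega
    rw [hins, Finset.sum_insert (by simp)]
    abel
  have hpair : (∑ j : Fin n, ∑ i ∈ Finset.univ.filter (· < j), G j i)
      + (∑ j : Fin n, ∑ i ∈ Finset.univ.filter (· < j), G i j)
      = Bof lam * Bbar lam * QR - ∑ _i : Fin n, eR 0 0 * QR := by
    linear_combination - hsplit + hswap + hdouble - hdiag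
  have hMain := partA lam hY
  rw [Hof] at hMain
  simp only [hterm] at hMain
  -- the key coefficient identity
  have key : (∑ j : Fin n,
        (lmono (cx σ j + 1) (cy σ j + 1) -
          ∑ i ∈ Finset.univ.filter (· < j),
            quadr (cx σ j - cx σ i) (cy σ j - cy σ i)))
      = (∑ x ∈ lam, (lmono ((arm lam x : ℤ) + 1) (-(leg lam x : ℤ))
            + lmono (-(arm lam x : ℤ)) ((leg lam x : ℤ) + 1)))
        + (∑ _i : Fin n, quadr 0 0)
        + (∑ j : Fin n,
            (-lmono (-cx σ j) (-cy σ j) +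
              ∑ i ∈ Finset.univ.filter (· < j),
                quadr (cx σ i - cx σ j) (cy σ i - cy σ j))) := by
    apply toR_inj
    simp only [toR_add, toR_sub, toR_neg, toR_sum, toR_lmono, toR_quadr]
    have hA : ∑ j : Fin n, eR (cx σ j + 1) (cy σ j + 1) = eR 1 1 * Bof lam := by
      rw [← hB, Finset.mul_sum]
      apply Finset.sum_congr rfl
      intro j _
      rw [eR_mul]
      ring_nf
    rw [Finset.sum_sub_distrib]
    have hsplit2 : (∑ j : Fin n,
          (-eR (-cx σ j) (-cy σ j) +
            ∑ i ∈ Finset.univ.filter (· < j),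
              eR (cx σ i - cx σ j) (cy σ i - cy σ j) * QR))
        = -(∑ j : Fin n, eR (-cx σ j) (-cy σ j))
          + ∑ j : Fin n, ∑ i ∈ Finset.univ.filter (· < j),
              eR (cx σ i - cx σ j) (cy σ i - cy σ j) * QR := by
      rw [Finset.sum_add_distrib, Finset.sum_neg_distrib]
    simp only [hGdef] at hpair
    linear_combination hA + hBb - hpair - hMain - hsplit2
  rw [← Omega0_sum, ← Omega0_sum, key, Omega0_add, Omega0_add, Omega0_sum, Omega0_sum]
  -- evaluate the three factors
  have hG : (∏ x ∈ lam, Omega0 (lmono ((arm lam x : ℤ) + 1) (-(leg lam x : ℤ))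
        + lmono (-(arm lam x : ℤ)) ((leg lam x : ℤ) + 1))) = gPoly lam := by
    rw [gPoly]
    apply Finset.prod_congr rfl
    intro x _
    rw [Omega0_add, lmono, lmono,
      Omega0_single _ (by simp only [ne_eq, Prod.ext_iff, Prod.fst_zero, Prod.snd_zero]; omega) 1,
      Omega0_single _ (by simp only [ne_eq, Prod.ext_iff, Prod.fst_zero, Prod.snd_zero]; omega) 1,
      zpow_one, zpow_one]
  have hq1 : (1 : K) - q ≠ 0 := by
    have := one_sub_monK_ne_zero (1, 0) (by simp [Prod.ext_iff])
    simpa [monK] using this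
  have ht1 : (1 : K) - t ≠ 0 := by
    have := one_sub_monK_ne_zero (0, 1) (by simp [Prod.ext_iff])
    simpa [monK] using this
  have hQ0 : Omega0 (quadr 0 0) = (1 - q * t) / ((1 - q) * (1 - t)) := by
    have hq0 : quadr 0 0 = lmono 0 0 - lmono 1 0 - lmono 0 1 + lmono 1 1 := by
      norm_num [quadr]
    rw [hq0, Omega0_add, Omega0_sub, Omega0_sub]
    rw [show lmono 0 0 = Finsupp.single (0 : ℤ × ℤ) 1 from rfl, Omega0_single_zero]
    rw [lmono, lmono, lmono,
      Omega0_single _ (by simp [Prod.ext_iff]) 1,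
      Omega0_single _ (by simp [Prod.ext_iff]) 1,
      Omega0_single _ (by simp [Prod.ext_iff]) 1]
    simp only [zpow_one, monK, zpow_zero, mul_one, one_mul]
    field_simp
  have hprodconst : (∏ _i : Fin n, Omega0 (quadr 0 0))
      = ((1 - q * t) / ((1 - q) * (1 - t))) ^ n := by
    rw [Finset.prod_const, hQ0, Finset.card_univ, Fintype.card_fin]
  rw [hG, hprodconst]

end
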